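/- For any prime p ≥ 7, ∑_{k=1}^{p-1} ⌊k^5 / p⌋ = (1/12)(p-2)(p-1)(p+1)(2p^2 - 2p + 3). -/

import Mathlib

lemma sum5_aux (n : ℕ) :
    12 * ∑ k ∈ Finset.Icc 1 n, k ^ 5 + (n * (n + 1)) ^ 2 = 2 * (n * (n + 1)) ^ 3 := by
  induction n with
  | zero => simp
  | succ n ih =>
    rw [Finset.sum_Icc_succ_top (by omega)]
    zify at ih ⊢
    linear_combination ih

lemma pair_mod (p k : ℕ) (hp : p.Prime) (h1 : 1 ≤ k) (h2 : k < p) :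
    k ^ 5 % p + (p - k) ^ 5 % p = p := by
  have hp0 : 0 < p := hp.pos
  haveI : NeZero p := ⟨hp0.ne'⟩
  have hdvd : p ∣ k ^ 5 + (p - k) ^ 5 := by
    have h0 : ((k ^ 5 + (p - k) ^ 5 : ℕ) : ZMod p) = 0 := by
      push_cast [Nat.cast_sub h2.le]
      simp only [ZMod.natCast_self]
      ring
    exact (ZMod.natCast_eq_zero_iff _ _).mp h0
  have ha : ¬ p ∣ k ^ 5 := by
    intro h
    have := hp.dvd_of_dvd_pow h
    have := Nat.le_of_dvd (by omega) this
    omega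
  have hb : ¬ p ∣ (p - k) ^ 5 := by
    intro h
    have := hp.dvd_of_dvd_pow h
    have := Nat.le_of_dvd (by omega) this
    omega
  have ha' : k ^ 5 % p ≠ 0 := fun h => ha (Nat.dvd_of_mod_eq_zero h)
  have hb' : (p - k) ^ 5 % p ≠ 0 := fun h => hb (Nat.dvd_of_mod_eq_zero h)
  have ha2 : k ^ 5 % p < p := Nat.mod_lt _ hp0
  have hb2 : (p - k) ^ 5 % p < p := Nat.mod_lt _ hp0
  have hdvd' : p ∣ k ^ 5 % p + (p - k) ^ 5 % p := by
    have hmod : (k ^ 5 + (p - k) ^ 5) % p = 0 := by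
      obtain ⟨c, hc⟩ := hdvd
      simp [hc, Nat.mul_mod_right]
    have h' : (k ^ 5 % p + (p - k) ^ 5 % p) % p = 0 := by
      rw [← Nat.add_mod]; exact hmod
    exact Nat.dvd_of_mod_eq_zero h'
  obtain ⟨c, hc⟩ := hdvd'
  rcases c with _ | _ | c
  · omega
  · omega
  · have : p * 2 ≤ p * (c + 1 + 1) := Nat.mul_le_mul_left p (by omega)
    omega

theorem stmt_11 (p : ℕ) (hp : p.Prime) (h7 : 7 ≤ p) :
    ∑ k ∈ Finset.Icc 1 (p - 1), k ^ 5 / p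
      = (p - 2) * (p - 1) * (p + 1) * (2 * p ^ 2 - 2 * p + 3) / 12 := by
  set S := ∑ k ∈ Finset.Icc 1 (p - 1), k ^ 5 / p with hS
  set M := ∑ k ∈ Finset.Icc 1 (p - 1), k ^ 5 % p with hMdef
  have hT : ∑ k ∈ Finset.Icc 1 (p - 1), k ^ 5 = p * S + M := by
    rw [hS, hMdef, Finset.mul_sum, ← Finset.sum_add_distrib]
    exact Finset.sum_congr rfl fun k _ => (Nat.div_add_mod _ _).symm
  have hM : 2 * M = p * (p - 1) := by
    have hre : M = ∑ i ∈ Finset.range (p - 1), (1 + i) ^ 5 % p := by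
      rw [hMdef, ← Finset.Ico_add_one_right_eq_Icc, Finset.sum_Ico_eq_sum_range, Nat.add_sub_cancel]
    have hrefl : ∑ i ∈ Finset.range (p - 1), (1 + i) ^ 5 % p
        = ∑ i ∈ Finset.range (p - 1), (1 + (p - 1 - 1 - i)) ^ 5 % p :=
      (Finset.sum_range_reflect (fun j => (1 + j) ^ 5 % p) (p - 1)).symm
    have h2 : 2 * M = ∑ i ∈ Finset.range (p - 1), p := by
      rw [hre, two_mul]
      nth_rewrite 2 [hrefl]
      rw [← Finset.sum_add_distrib]
      refine Finset.sum_congr rfl fun i hi => ?_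
      rw [Finset.mem_range] at hi
      rw [show 1 + (p - 1 - 1 - i) = p - (1 + i) by omega]
      exact pair_mod p (1 + i) hp (by omega) (by omega)
    rw [h2, Finset.sum_const, Finset.card_range, smul_eq_mul, Nat.mul_comm]
  have hsum5 := sum5_aux (p - 1)
  rw [show p - 1 + 1 = p by omega] at hsum5
  rw [hT] at hsum5
  obtain ⟨m, rfl⟩ : ∃ m, p = m + 2 := ⟨p - 2, by omega⟩
  have hsub1 : m + 2 - 1 = m + 1 := by omega
  have hsub2 : m + 2 - 2 = m := by omega
  rw [hsub1] at hsum5 hM ⊢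
  rw [hsub2]
  have hsub3 : 2 * (m + 2) ^ 2 - 2 * (m + 2) + 3 = 2 * m ^ 2 + 6 * m + 7 := by
    have : 2 * (m + 2) ^ 2 = 2 * m ^ 2 + 8 * m + 8 := by ring
    omega
  rw [hsub3]
  have h12 : 12 * S = m * (m + 1) * (m + 3) * (2 * m ^ 2 + 6 * m + 7) := by
    have hq : ((m : ℚ) + 2) * (12 * (S : ℚ))
        = ((m : ℚ) + 2) * ((m : ℚ) * (m + 1) * (m + 3) * (2 * m ^ 2 + 6 * m + 7)) := by
      have hsum5' : 12 * (((m : ℚ) + 2) * S + (M : ℚ)) + (((m : ℚ) + 1) * (m + 2)) ^ 2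
          = 2 * (((m : ℚ) + 1) * (m + 2)) ^ 3 := by exact_mod_cast hsum5
      have hM' : 2 * (M : ℚ) = ((m : ℚ) + 2) * ((m : ℚ) + 1) := by exact_mod_cast hM
      linear_combination hsum5' - 6 * hM'
    have hne : ((m : ℚ) + 2) ≠ 0 := by positivity
    have := mul_left_cancel₀ hne hq
    exact_mod_cast this
  rw [← h12, Nat.mul_div_cancel_left _ (by norm_num)]
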